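/- Let Y be a standard normal random variable, let G : [0,∞) → ℝ be nondecreasing and right-continuous, and let u ∈ ℝ be such that a := inf{x ≥ 0 : G(x) > u} satisfies 0 < a < ∞. Then E[Y · 1{G(|Y|) > u}] = 0 and E[(Y² − 1) · 1{G(|Y|) > u}] = 2 a φ(a) ≠ 0. In particular, the Hermite rank of the function y ↦ 1{G(|y|) > u} − P(G(|Y|) > u) equals 2. -/

import Mathlib

open MeasureTheory ProbabilityTheory Set
open scoped NNReal ENNReal

noncomputable section

/-- the standard normal density -/
def stdGaussDensity (x : ℝ) : ℝ := (Real.sqrt (2 * Real.pi))⁻¹ * Real.exp (-x ^ 2 / 2)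

lemma stdGaussDensity_pos (x : ℝ) : 0 < stdGaussDensity x := by
  unfold stdGaussDensity
  positivity

lemma stdGaussDensity_even (x : ℝ) : stdGaussDensity (-x) = stdGaussDensity x := by
  simp [stdGaussDensity]

lemma stdGaussDensity_abs (x : ℝ) : stdGaussDensity |x| = stdGaussDensity x := by
  simp [stdGaussDensity, sq_abs]

lemma gaussianPDFReal_eq_std : gaussianPDFReal 0 1 = stdGaussDensity := by
  ext x
  simp [gaussianPDFReal, stdGaussDensity]

lemma integral_gaussianReal_eq (g : ℝ → ℝ) :
    ∫ y, g y ∂(gaussianReal 0 1) = ∫ y, stdGaussDensity y * g y := by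
  rw [gaussianReal_of_var_ne_zero 0 one_ne_zero]
  have h : gaussianPDF 0 1
      = fun x => (((gaussianPDFReal 0 1 x).toNNReal : ℝ≥0) : ℝ≥0∞) := rfl
  rw [h, integral_withDensity_eq_integral_smul
    ((measurable_gaussianPDFReal 0 1).real_toNNReal) g]
  refine integral_congr_ae (Filter.Eventually.of_forall fun x => ?_)
  show (gaussianPDFReal 0 1 x).toNNReal • g x = stdGaussDensity x * g x
  rw [NNReal.smul_def, Real.coe_toNNReal _ (gaussianPDFReal_nonneg _ _ _), smul_eq_mul,
    gaussianPDFReal_eq_std]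

lemma exp_half_eq (x : ℝ) : Real.exp (-(1/2 : ℝ) * x ^ 2) = Real.exp (-x ^ 2 / 2) := by
  congr 1
  ring

lemma integrable_std_sq_sub_one :
    Integrable (fun x : ℝ => stdGaussDensity x * (x ^ 2 - 1)) := by
  have h1 : Integrable (fun x : ℝ => x ^ 2 * Real.exp (-(1/2 : ℝ) * x ^ 2)) := by
    have := integrable_rpow_mul_exp_neg_mul_sq (b := 1/2) (by norm_num) (s := 2) (by norm_num)
    have h2 : ∀ x : ℝ, x ^ (2 : ℝ) = x ^ (2 : ℕ) := fun x => by
      rw [show ((2 : ℝ) = ((2 : ℕ) : ℝ)) by norm_num, Real.rpow_natCast]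
    simpa [h2] using this
  have h2 : Integrable (fun x : ℝ => Real.exp (-(1/2 : ℝ) * x ^ 2)) :=
    integrable_exp_neg_mul_sq (by norm_num)
  have h3 := ((h1.sub h2).const_mul (Real.sqrt (2 * Real.pi))⁻¹)
  refine h3.congr (Filter.Eventually.of_forall fun x => ?_)
  simp only [Pi.sub_apply, exp_half_eq, stdGaussDensity]
  ring

lemma tendsto_neg_mul_std :
    Filter.Tendsto (fun x : ℝ => -(x * stdGaussDensity x)) Filter.atTop (nhds 0) := by
  have hlin : Filter.Tendsto (fun x : ℝ => -(1/2 : ℝ) * x) Filter.atTop Filter.atBot :=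
    Filter.tendsto_id.const_mul_atTop_of_neg (by norm_num)
  have hexp : Filter.Tendsto (fun x : ℝ => Real.exp (-(1/2 : ℝ) * x)) Filter.atTop (nhds 0) :=
    Real.tendsto_exp_atBot.comp hlin
  have h : Filter.Tendsto (fun x : ℝ => x ^ (1 : ℝ) * Real.exp (-(1/2 : ℝ) * x ^ 2))
      Filter.atTop (nhds 0) :=
    ((rpow_mul_exp_neg_mul_sq_isLittleO_exp_neg (by norm_num) 1).isBigO).trans_tendsto hexp
  have h2 := (h.const_mul (Real.sqrt (2 * Real.pi))⁻¹).neg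
  rw [mul_zero, neg_zero] at h2
  refine h2.congr fun x => ?_
  simp only [Real.rpow_one, exp_half_eq, stdGaussDensity]
  ring

lemma integral_Ioi_std (a : ℝ) :
    ∫ x in Set.Ioi a, stdGaussDensity x * (x ^ 2 - 1) = a * stdGaussDensity a := by
  have hderiv : ∀ x ∈ Set.Ici a,
      HasDerivAt (fun y : ℝ => -(y * stdGaussDensity y)) (stdGaussDensity x * (x ^ 2 - 1)) x := by
    intro x _
    have h1 : HasDerivAt (fun y : ℝ => -y ^ 2 / 2) (-x) x := by
      have : HasDerivAt (fun y : ℝ => -y ^ 2 / 2) _ x := ((hasDerivAt_pow 2 x).neg.div_const 2)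
      convert this using 1
      simp
      ring
    have h2 : HasDerivAt (fun y : ℝ => Real.exp (-y ^ 2 / 2)) (Real.exp (-x ^ 2 / 2) * (-x)) x :=
      h1.exp
    have h3 : HasDerivAt (fun y : ℝ => -(y * stdGaussDensity y)) _ x := ((hasDerivAt_id x).mul (h2.const_mul (Real.sqrt (2 * Real.pi))⁻¹)).neg
    convert h3 using 1
    simp only [stdGaussDensity, id_eq]
    ring
  have hint : IntegrableOn (fun x : ℝ => stdGaussDensity x * (x ^ 2 - 1)) (Set.Ioi a) :=
    integrable_std_sq_sub_one.integrableOn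
  have := integral_Ioi_of_hasDerivAt_of_tendsto' hderiv hint tendsto_neg_mul_std
  rw [this]
  ring

/-- for a nondecreasing right-continuous `G` on `[0,∞)` and a level `u` whose
generalized inverse `a = inf{x ≥ 0 : G(x) > u}` satisfies `0 < a < ∞`, one has
`E[Y·1{G(|Y|) > u}] = 0` and `E[(Y²−1)·1{G(|Y|) > u}] = 2aφ(a) ≠ 0`; i.e. the function
`y ↦ 1{G(|y|) > u} − P(G(|Y|) > u)` has Hermite rank 2. -/
theorem hermite_rank_two_abs_indicator {Ω : Type*} [MeasurableSpace Ω]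
    (P : Measure Ω) [IsProbabilityMeasure P]
    (Y : Ω → ℝ) (hYmeas : Measurable Y)
    (hY : Measure.map Y P = gaussianReal 0 1)
    (G : ℝ → ℝ) (hGmono : MonotoneOn G (Set.Ici 0))
    (hGrc : ∀ x ≥ (0 : ℝ), ContinuousWithinAt G (Set.Ici x) x)
    (u : ℝ) (hne : {x : ℝ | 0 ≤ x ∧ u < G x}.Nonempty)
    (ha : 0 < sInf {x : ℝ | 0 ≤ x ∧ u < G x}) :
    (∫ ω, (if u < G |Y ω| then Y ω else 0) ∂P) = 0 ∧
    (∫ ω, (if u < G |Y ω| then Y ω ^ 2 - 1 else 0) ∂P) =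
      2 * sInf {x : ℝ | 0 ≤ x ∧ u < G x} * stdGaussDensity (sInf {x : ℝ | 0 ≤ x ∧ u < G x}) ∧
    2 * sInf {x : ℝ | 0 ≤ x ∧ u < G x} * stdGaussDensity (sInf {x : ℝ | 0 ≤ x ∧ u < G x})
      ≠ 0 := by
  set S := {x : ℝ | 0 ≤ x ∧ u < G x} with hS
  set a := sInf S with haDef
  have hbdd : BddBelow S := ⟨0, fun x hx => hx.1⟩
  have hmem : ∀ y : ℝ, a < |y| → u < G |y| := by
    intro y hy
    obtain ⟨x, hxS, hxlt⟩ := exists_lt_of_csInf_lt hne hy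
    exact lt_of_lt_of_le hxS.2 (hGmono hxS.1 (abs_nonneg y) hxlt.le)
  have hup : ∀ y : ℝ, u < G |y| → a ≤ |y| := fun y h => csInf_le hbdd ⟨abs_nonneg y, h⟩
  have hAmeas : MeasurableSet {y : ℝ | u < G |y|} := by
    by_cases hGa : u < G a
    · have h : {y : ℝ | u < G |y|} = {y : ℝ | a ≤ |y|} := by
        ext y
        simp only [Set.mem_setOf_eq]
        exact ⟨hup y, fun h => lt_of_lt_of_le hGa (hGmono ha.le (abs_nonneg y) h)⟩
      rw [h]
      exact measurable_abs measurableSet_Ici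
    · have h : {y : ℝ | u < G |y|} = {y : ℝ | a < |y|} := by
        ext y
        simp only [Set.mem_setOf_eq]
        constructor
        · intro h
          rcases lt_or_eq_of_le (hup y h) with h' | h'
          · exact h'
          · exact absurd (h' ▸ h) hGa
        · exact hmem y
      rw [h]
      exact measurable_abs measurableSet_Ioi
  have haeiff : ∀ᵐ y : ℝ ∂(volume : Measure ℝ), (u < G |y| ↔ a < |y|) := by
    have hnull : (volume : Measure ℝ) {y : ℝ | |y| = a} = 0 := by
      have hsub : {y : ℝ | |y| = a} ⊆ {a, -a} := by
        intro y hy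
        rcases (abs_eq ha.le).mp hy with h | h
        · exact Or.inl h
        · exact Or.inr h
      exact measure_mono_null hsub (((Set.finite_singleton (-a)).insert a).measure_zero _)
    filter_upwards [measure_eq_zero_iff_ae_notMem.mp hnull] with y hy
    exact ⟨fun h => lt_of_le_of_ne (hup y h) (Ne.symm hy), hmem y⟩
  -- measurable integrands
  have hg1meas : Measurable (fun y : ℝ => if u < G |y| then y else 0) :=
    Measurable.ite hAmeas measurable_id measurable_const
  have hg2meas : Measurable (fun y : ℝ => if u < G |y| then y ^ 2 - 1 else 0) :=
    Measurable.ite hAmeas ((measurable_id.pow_const 2).sub measurable_const) measurable_const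
  -- transfer to Lebesgue integrals
  have e1 : (∫ ω, (if u < G |Y ω| then Y ω else 0) ∂P)
      = ∫ y, stdGaussDensity y * (if u < G |y| then y else 0) := by
    have h := integral_map (μ := P) hYmeas.aemeasurable hg1meas.aestronglyMeasurable
    rw [hY] at h
    rw [← h, integral_gaussianReal_eq]
  have e2 : (∫ ω, (if u < G |Y ω| then Y ω ^ 2 - 1 else 0) ∂P)
      = ∫ y, stdGaussDensity y * (if u < G |y| then y ^ 2 - 1 else 0) := by
    have h := integral_map (μ := P) hYmeas.aemeasurable hg2meas.aestronglyMeasurable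
    rw [hY] at h
    rw [← h, integral_gaussianReal_eq]
  -- rewrite conditions a.e.
  have e1' : ∫ y, stdGaussDensity y * (if u < G |y| then y else 0)
      = ∫ y, stdGaussDensity y * (if a < |y| then y else 0) :=
    integral_congr_ae (haeiff.mono fun y hy => by simp only [hy])
  have e2' : ∫ y, stdGaussDensity y * (if u < G |y| then y ^ 2 - 1 else 0)
      = ∫ y, stdGaussDensity y * (if a < |y| then y ^ 2 - 1 else 0) :=
    integral_congr_ae (haeiff.mono fun y hy => by simp only [hy])
  -- first integral: odd function
  have hfirst : ∫ y, stdGaussDensity y * (if a < |y| then y else 0) = 0 := by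
    set f := fun y : ℝ => stdGaussDensity y * (if a < |y| then y else 0) with hf
    have hneg : ∀ y, f (-y) = -f y := by
      intro y
      by_cases h : a < |y| <;>
        simp [hf, abs_neg, h, stdGaussDensity_even, mul_neg]
    have hcomp : ∫ y, f (-y) = ∫ y, f y :=
      (Measure.measurePreserving_neg (volume : Measure ℝ)).integral_comp
        (Homeomorph.neg ℝ).measurableEmbedding f
    have hkey : ∫ y, f y = -∫ y, f y := by
      calc ∫ y, f y = ∫ y, f (-y) := hcomp.symm
        _ = ∫ y, -f y := by simp_rw [hneg]
        _ = -∫ y, f y := integral_neg f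
    linarith
  -- second integral
  have hsecond : ∫ y, stdGaussDensity y * (if a < |y| then y ^ 2 - 1 else 0)
      = 2 * a * stdGaussDensity a := by
    set f0 := fun t : ℝ => stdGaussDensity t * (if a < t then t ^ 2 - 1 else 0) with hf0
    have habs : ∫ y, stdGaussDensity y * (if a < |y| then y ^ 2 - 1 else 0) = ∫ y, f0 |y| := by
      refine integral_congr_ae (Filter.Eventually.of_forall fun y => ?_)
      by_cases h : a < |y| <;> simp [hf0, h, sq_abs, stdGaussDensity_abs]
    have hca : ∫ y, f0 |y| = 2 * ∫ x in Set.Ioi (0 : ℝ), f0 x := integral_comp_abs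
    have hind : f0 = Set.indicator (Set.Ioi a) (fun t : ℝ => stdGaussDensity t * (t ^ 2 - 1)) := by
      funext t
      by_cases h : a < t <;> simp [hf0, Set.indicator_apply, Set.mem_Ioi, h]
    have hinter : Set.Ioi (0 : ℝ) ∩ Set.Ioi a = Set.Ioi a := by
      rw [Set.Ioi_inter_Ioi, max_eq_right ha.le]
    rw [habs, hca, hind, setIntegral_indicator measurableSet_Ioi, hinter, integral_Ioi_std a]
    ring
  refine ⟨by rw [e1, e1', hfirst], by rw [e2, e2', hsecond], ?_⟩
  exact (mul_pos (mul_pos two_pos ha) (stdGaussDensity_pos a)).ne'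

end
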